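/- Let D be a triangulated category with a bounded weight structure. Then D is generated, as a triangulated category, by its heart: the smallest full triangulated subcategory of D closed under isomorphisms, shifts, and cones containing the heart D_w^♥ equals D itself, after closing under retracts. -/

import Mathlib

open CategoryTheory CategoryTheory.Limits CategoryTheory.Pretriangulated

variable (C : Type*) [Category C] [Preadditive C] [HasZeroObject C]
  [HasShift C ℤ] [∀ n : ℤ, (shiftFunctor C n).Additive] [Pretriangulated C]

/-- A weight structure on a (pre)triangulated category `C`:
a pair of full subcategories (given as sets of objects) `ge = C_{w≥0}` and `le = C_{w≤0}`,
closed under retracts, with shift-stability, orthogonality and weight decompositions. -/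
structure WeightStructure where
  ge : Set C
  le : Set C
  ge_retract : ∀ (X Y : C), X ∈ ge → (∃ (i : Y ⟶ X) (r : X ⟶ Y), i ≫ r = 𝟙 Y) → Y ∈ ge
  le_retract : ∀ (X Y : C), X ∈ le → (∃ (i : Y ⟶ X) (r : X ⟶ Y), i ≫ r = 𝟙 Y) → Y ∈ le
  ge_shift : ∀ X : C, X ∈ ge → X⟦(1 : ℤ)⟧ ∈ ge
  le_shift : ∀ X : C, X ∈ le → X⟦(-1 : ℤ)⟧ ∈ le
  orth : ∀ (X Y : C), X ∈ le → Y ∈ ge → ∀ f : X ⟶ Y⟦(1 : ℤ)⟧, f = 0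
  decomp : ∀ Z : C, ∃ (X Y : C) (_ : X ∈ le) (_ : Y ∈ ge)
    (f : X ⟶ Z) (g : Z ⟶ Y⟦(1 : ℤ)⟧) (h : Y⟦(1 : ℤ)⟧ ⟶ X⟦(1 : ℤ)⟧),
    Triangle.mk f g h ∈ distTriang C

namespace WeightGenAux

variable {C}

lemma ge_of_iso (w : WeightStructure C) {X Y : C} (h : X ∈ w.ge) (e : X ≅ Y) : Y ∈ w.ge :=
  w.ge_retract X Y h ⟨e.inv, e.hom, e.inv_hom_id⟩

lemma le_of_iso (w : WeightStructure C) {X Y : C} (h : X ∈ w.le) (e : X ≅ Y) : Y ∈ w.le :=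
  w.le_retract X Y h ⟨e.inv, e.hom, e.inv_hom_id⟩

/-- `X⟦a⟧⟦b⟧ ≅ X⟦c⟧` when `a + b = c`. -/
noncomputable def sh (a b c : ℤ) (h : a + b = c) (X : C) : (X⟦a⟧)⟦b⟧ ≅ X⟦c⟧ :=
  ((shiftFunctorAdd' C a b c h).app X).symm

/-- `X⟦1⟧⟦-1⟧ ≅ X`. -/
noncomputable def sh10 (X : C) : (X⟦(1:ℤ)⟧)⟦(-1:ℤ)⟧ ≅ X :=
  sh 1 (-1) 0 (by ring) X ≪≫ (shiftFunctorZero C ℤ).app X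

/-- `w.le` is closed under extensions. -/
lemma le_ext (w : WeightStructure C) (T : Triangle C) (hT : T ∈ distTriang C)
    (h₁ : T.obj₁ ∈ w.le) (h₃ : T.obj₃ ∈ w.le) : T.obj₂ ∈ w.le := by
  obtain ⟨X, Y, hX, hY, f, g, h, hD⟩ := w.decomp T.obj₂
  have hg : g = 0 := by
    obtain ⟨g', hg'⟩ := Triangle.yoneda_exact₂ T hT g (w.orth _ _ h₁ hY _)
    rw [hg', w.orth _ _ h₃ hY g', comp_zero]
  obtain ⟨r, hr⟩ := Triangle.coyoneda_exact₂ _ hD (𝟙 T.obj₂)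
    (by change 𝟙 T.obj₂ ≫ g = 0; rw [hg, comp_zero])
  exact w.le_retract X T.obj₂ hX ⟨r, f, hr.symm⟩

/-- `w.ge` is closed under extensions. -/
lemma ge_ext (w : WeightStructure C) (T : Triangle C) (hT : T ∈ distTriang C)
    (h₁ : T.obj₁ ∈ w.ge) (h₃ : T.obj₃ ∈ w.ge) : T.obj₂ ∈ w.ge := by
  obtain ⟨X, Y, hX, hY, f, g, h, hD⟩ := w.decomp (T.obj₂⟦(1:ℤ)⟧)
  have hT' : (CategoryTheory.shiftFunctor (Triangle C) (1:ℤ)).obj T ∈ distTriang C :=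
    Triangle.shift_distinguished T hT 1
  set T' := (CategoryTheory.shiftFunctor (Triangle C) (1:ℤ)).obj T with hT'def
  have hf : f = 0 := by
    obtain ⟨φ, hφ⟩ := Triangle.coyoneda_exact₂ T' hT'
      (show X ⟶ T'.obj₂ from f)
      (w.orth _ _ hX h₃ (f ≫ T'.mor₂))
    have hφ' : f = φ ≫ T'.mor₁ := hφ
    rw [hφ', w.orth _ _ hX h₁ φ]; exact zero_comp
  obtain ⟨r, hr⟩ := Triangle.yoneda_exact₂ _ hD (𝟙 (T.obj₂⟦(1:ℤ)⟧))
    (by change f ≫ 𝟙 _ = 0; rw [hf, zero_comp])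
  change 𝟙 (T.obj₂⟦(1:ℤ)⟧) = g ≫ r at hr
  -- `T.obj₂⟦1⟧` is a retract of `Y⟦1⟧`; transfer this down by `⟦-1⟧`.
  have hretr : (T.obj₂⟦(1:ℤ)⟧)⟦(-1:ℤ)⟧ ∈ w.ge := by
    refine w.ge_retract ((Y⟦(1:ℤ)⟧)⟦(-1:ℤ)⟧) _ (ge_of_iso w hY (sh10 Y).symm)
      ⟨(shiftFunctor C (-1:ℤ)).map g, (shiftFunctor C (-1:ℤ)).map r, ?_⟩
    exact ((shiftFunctor C (-1:ℤ)).map_comp g r).symm.trans (by rw [← hr, CategoryTheory.Functor.map_id])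
  exact ge_of_iso w hretr (sh10 T.obj₂)

end WeightGenAux

open WeightGenAux in
/-- If the weight structure is bounded, then `D` is generated by its heart:
any class of objects containing the heart and closed under isomorphisms, shifts,
cones and retracts is all of `D`. -/
theorem weight_bounded_generated_by_heart (w : WeightStructure C)
    (hbounded : ∀ Z : C, ∃ m n : ℤ, Z⟦-m⟧ ∈ w.ge ∧ Z⟦-n⟧ ∈ w.le)
    (S : Set C)
    (hheart : w.ge ∩ w.le ⊆ S)
    (hiso : ∀ X Y : C, X ∈ S → Nonempty (X ≅ Y) → Y ∈ S)
    (hshift : ∀ X : C, X ∈ S → X⟦(1 : ℤ)⟧ ∈ S ∧ X⟦(-1 : ℤ)⟧ ∈ S)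
    (hcone : ∀ T : Triangle C, T ∈ (distTriang C) →
      T.obj₁ ∈ S → T.obj₂ ∈ S → T.obj₃ ∈ S)
    (hretract : ∀ X Y : C, X ∈ S → (∃ (i : Y ⟶ X) (r : X ⟶ Y), i ≫ r = 𝟙 Y) → Y ∈ S) :
    S = Set.univ := by
  have hisoS : ∀ {X Y : C}, X ∈ S → (X ≅ Y) → Y ∈ S := fun h e => hiso _ _ h ⟨e⟩
  -- `S` is closed under all shifts
  have hSshift : ∀ (X : C) (n : ℤ), X ∈ S → X⟦n⟧ ∈ S := by
    intro X n hX
    induction n using Int.induction_on with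
    | zero => exact hisoS hX ((shiftFunctorZero C ℤ).symm.app X)
    | succ k ih => exact hisoS ((hshift _ ih).1) (sh k 1 (k+1) rfl X)
    | pred k ih => exact hisoS ((hshift _ ih).2) (sh (-k) (-1) (-k-1) (by ring) X)
  -- `ge` is closed under nonnegative shifts, `le` under nonpositive ones
  have hged : ∀ (X : C) (k : ℕ), X ∈ w.ge → X⟦(k:ℤ)⟧ ∈ w.ge := by
    intro X k hX
    induction k with
    | zero =>
        refine ge_of_iso w hX ?_
        have : ((0:ℕ):ℤ) = 0 := rfl
        rw [this]
        exact (shiftFunctorZero C ℤ).symm.app X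
    | succ j ih =>
        exact ge_of_iso w (w.ge_shift _ ih) (sh j 1 ((j+1:ℕ):ℤ) (by push_cast; ring) X)
  have hledown : ∀ (X : C) (k : ℕ), X ∈ w.le → X⟦-(k:ℤ)⟧ ∈ w.le := by
    intro X k hX
    induction k with
    | zero =>
        refine le_of_iso w hX ?_
        have : (-((0:ℕ):ℤ)) = 0 := rfl
        rw [this]
        exact (shiftFunctorZero C ℤ).symm.app X
    | succ j ih =>
        exact le_of_iso w (w.le_shift _ ih) (sh (-(j:ℤ)) (-1) (-((j+1:ℕ):ℤ)) (by push_cast; ring) X)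
  -- main induction on the length of the weight range
  have key : ∀ (k : ℕ) (Z : C) (m : ℤ), Z⟦-m⟧ ∈ w.ge → Z⟦-(m+(k:ℤ))⟧ ∈ w.le → Z ∈ S := by
    intro k
    induction k with
    | zero =>
        intro Z m hg hl
        have h0 : Z⟦-m⟧ ∈ w.le := by
          have : (-(m+((0:ℕ):ℤ))) = -m := by push_cast; ring
          rwa [this] at hl
        exact hisoS (hSshift _ m (hheart ⟨hg, h0⟩))
          (sh (-m) m 0 (by ring) Z ≪≫ (shiftFunctorZero C ℤ).app Z)
    | succ k ih =>
        intro Z m hg hl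
        set W := Z⟦-(m+(k:ℤ))⟧ with hWdef
        obtain ⟨X, Y, hX, hY, f, g, h, hD⟩ := w.decomp W
        set D := Triangle.mk f g h with hDdef
        -- W⟦-1⟧ has weights ≤ 0
        have hWm1 : W⟦(-1:ℤ)⟧ ∈ w.le :=
          le_of_iso w hl (sh (-(m+(k:ℤ))) (-1) (-(m+((k+1:ℕ):ℤ))) (by push_cast; ring) Z).symm
        -- W⟦k⟧ has weights ≥ 0
        have hWk : W⟦(k:ℤ)⟧ ∈ w.ge :=
          ge_of_iso w hg (sh (-(m+(k:ℤ))) (k:ℤ) (-m) (by ring) Z).symm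
        -- Y is in the heart
        have hrot : D.rotate ∈ distTriang C := rot_of_distTriang _ hD
        have hT1 : (CategoryTheory.shiftFunctor (Triangle C) (-1:ℤ)).obj D.rotate ∈ distTriang C :=
          Triangle.shift_distinguished _ hrot (-1)
        have hYle : Y ∈ w.le := by
          have := le_ext w _ hT1 (show W⟦(-1:ℤ)⟧ ∈ w.le from hWm1)
            (show (X⟦(1:ℤ)⟧)⟦(-1:ℤ)⟧ ∈ w.le from le_of_iso w hX (sh10 X).symm)
          exact le_of_iso w this (sh10 Y)
        have hYS : Y ∈ S := hheart ⟨hY, hYle⟩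
        -- X has weights in [-k, 0]
        have hinv : D.invRotate ∈ distTriang C := inv_rot_of_distTriang _ hD
        have hT2 : (CategoryTheory.shiftFunctor (Triangle C) (k:ℤ)).obj D.invRotate
            ∈ distTriang C := Triangle.shift_distinguished _ hinv (k:ℤ)
        have hXk : X⟦(k:ℤ)⟧ ∈ w.ge := by
          refine ge_ext w _ hT2
            (show ((Y⟦(1:ℤ)⟧)⟦(-1:ℤ)⟧)⟦(k:ℤ)⟧ ∈ w.ge from ?_)
            (show W⟦(k:ℤ)⟧ ∈ w.ge from hWk)
          exact ge_of_iso w (hged Y k hY) ((shiftFunctor C (k:ℤ)).mapIso (sh10 Y)).symm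
        -- X ∈ S by the induction hypothesis (length k)
        have hXS : X ∈ S := by
          refine ih X (-(k:ℤ)) ?_ ?_
          · have : (-(-(k:ℤ))) = (k:ℤ) := by ring
            rw [this]; exact hXk
          · have : (-(-(k:ℤ)+(k:ℤ))) = 0 := by ring
            rw [this]
            exact le_of_iso w hX ((shiftFunctorZero C ℤ).symm.app X)
        -- conclude W ∈ S from the triangle Y → X → W
        have hWS : W ∈ S :=
          hcone D.invRotate hinv (hisoS hYS (sh10 Y).symm) hXS
        exact hisoS (hSshift W (m+(k:ℤ)) hWS)
          (sh (-(m+(k:ℤ))) (m+(k:ℤ)) 0 (by ring) Z ≪≫ (shiftFunctorZero C ℤ).app Z)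
  -- wrap up using boundedness
  apply Set.eq_univ_of_forall
  intro Z
  obtain ⟨m, n, hg, hl⟩ := hbounded Z
  have hle' : Z⟦-(max n m)⟧ ∈ w.le := by
    have h1 : Z⟦-n⟧⟦-(((max n m) - n).toNat : ℤ)⟧ ∈ w.le := hledown _ _ hl
    refine le_of_iso w h1 (sh (-n) (-(((max n m) - n).toNat : ℤ)) (-(max n m)) ?_ Z)
    rw [Int.toNat_of_nonneg (sub_nonneg.2 (le_max_left n m))]
    ring
  refine key ((max n m) - m).toNat Z m hg ?_
  have : m + (((max n m) - m).toNat : ℤ) = max n m := by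
    rw [Int.toNat_of_nonneg (sub_nonneg.2 (le_max_right n m))]
    ring
  rw [this]
  exact hle'
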